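/- Let x_1,…,x_n ∈ ℝ^d (n ≥ 1) with labels y_i ∈ {−1,+1} be linearly separable, let ω_i > 0, Δ_i > 0, ι_i ∈ ℝ, and let L(w) = Σ_{i=1}^n ω_i log(1 + e^{ι_i} e^{−Δ_i y_i ⟨x_i, w⟩}). Then for every R > 0, every minimizer w_R of L over the closed ball {w : ‖w‖₂ ≤ R} lies on the boundary: ‖w_R‖₂ = R. -/

import Mathlib

open scoped RealInnerProductSpace

theorem stmt7 {n d : ℕ} (hn : 1 ≤ n)
    (x : Fin n → EuclideanSpace ℝ (Fin d)) (y : Fin n → ℝ)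
    (hy : ∀ i, y i = 1 ∨ y i = -1)
    (hsep : ∃ w : EuclideanSpace ℝ (Fin d), ∀ i, 1 ≤ y i * ⟪x i, w⟫)
    (ω Δ ι : Fin n → ℝ) (hω : ∀ i, 0 < ω i) (hΔ : ∀ i, 0 < Δ i)
    (L : EuclideanSpace ℝ (Fin d) → ℝ)
    (hL : ∀ w, L w = ∑ i, ω i *
      Real.log (1 + Real.exp (ι i) * Real.exp (-(Δ i) * (y i * ⟪x i, w⟫)))) :
    ∀ R > (0:ℝ), ∀ wR : EuclideanSpace ℝ (Fin d),
      ‖wR‖ ≤ R → (∀ w, ‖w‖ ≤ R → L wR ≤ L w) → ‖wR‖ = R := by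
  intro R hR wR hwR hmin
  by_contra hne
  have hlt : ‖wR‖ < R := lt_of_le_of_ne hwR hne
  obtain ⟨ws, hws⟩ := hsep
  have hwspos : (0:ℝ) < ‖ws‖ + 1 := by positivity
  set t : ℝ := (R - ‖wR‖) / (‖ws‖ + 1) with ht
  have htpos : 0 < t := div_pos (by linarith) hwspos
  set w' := wR + t • ws with hw'def
  have hw' : ‖w'‖ ≤ R := by
    have h2 : t * (‖ws‖ + 1) = R - ‖wR‖ := by
      rw [ht, div_mul_cancel₀ _ hwspos.ne']
    calc ‖w'‖ ≤ ‖wR‖ + ‖t • ws‖ := norm_add_le _ _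
      _ = ‖wR‖ + t * ‖ws‖ := by rw [norm_smul, Real.norm_of_nonneg htpos.le]
      _ ≤ ‖wR‖ + (R - ‖wR‖) := by nlinarith [norm_nonneg ws]
      _ = R := by ring
  have hcon := hmin w' hw'
  have hstrict : L w' < L wR := by
    rw [hL, hL]
    apply Finset.sum_lt_sum_of_nonempty
    · exact ⟨⟨0, hn⟩, Finset.mem_univ _⟩
    intro i _
    have hinner : ⟪x i, w'⟫ = ⟪x i, wR⟫ + t * ⟪x i, ws⟫ := by
      rw [hw'def, inner_add_right, real_inner_smul_right]
    have ha : 1 ≤ y i * ⟪x i, ws⟫ := hws i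
    have key : -(Δ i) * (y i * ⟪x i, w'⟫) < -(Δ i) * (y i * ⟪x i, wR⟫) := by
      rw [hinner]
      nlinarith [mul_pos (mul_pos (hΔ i) htpos) (lt_of_lt_of_le one_pos ha)]
    apply mul_lt_mul_of_pos_left _ (hω i)
    apply Real.log_lt_log
    · positivity
    have := Real.exp_lt_exp.mpr key
    nlinarith [Real.exp_pos (ι i)]
  linarith
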